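/- Let F_1,…,F_k be k elements of the space of reduced q-polynomials over F_{q^m} (equivalently, of F_{q^m}^m via coefficient vectors), each with zero constant term, such that X, F_1, …, F_k are F_{q^m}-linearly independent. Let C = span_{F_{q^m}}{X, F_1,…,F_k} with dual C^⊥ taken for the F_{q^m}-bilinear pairing ⟨f,g⟩ = Σ_ℓ f_ℓ g_ℓ on coefficient vectors. Let M be the k×k matrix over F_{q^m} with M_{jj'} = Σ_{ℓ=1}^{m−1} (F_j)_ℓ (F_{j'})_ℓ. Then dim_{F_{q^m}}(C ∩ C^⊥) = k − rank(M). -/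

import Mathlib

/-- The symmetric bilinear pairing `⟨f,g⟩ = ∑ ℓ f_ℓ g_ℓ` on coefficient vectors. -/
noncomputable def dotForm (E : Type*) [Field E] (m : ℕ) :
    LinearMap.BilinForm E (Fin m → E) :=
  LinearMap.mk₂ E (fun f g => ∑ ℓ, f ℓ * g ℓ)
    (fun f f' g => by simp [add_mul, Finset.sum_add_distrib])
    (fun c f g => by simp [Finset.mul_sum, mul_assoc])
    (fun f g g' => by simp [mul_add, Finset.sum_add_distrib])
    (fun c f g => by simp [Finset.mul_sum, mul_left_comm])

theorem dotForm_apply' (E : Type*) [Field E] (m : ℕ) (f g : Fin m → E) :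
    dotForm E m f g = ∑ ℓ, f ℓ * g ℓ := rfl

/-- Hull dimension of the rank-distance code `C = ⟨X, F₁, …, F_k⟩_{F_{q^m}}` with each `F_j`
having zero constant term and `X, F₁, …, F_k` linearly independent: for the Gram matrix
`M_{jj'} = ∑_{ℓ≥1} (F_j)_ℓ (F_{j'})_ℓ`, `dim (C ∩ C^⊥) = k - rank M`. -/
theorem stmt14 (q m k : ℕ) (hq : IsPrimePow q) [NeZero m]
    (E : Type*) [Field E] [Fintype E] (hcard : Fintype.card E = q ^ m)
    (F : Fin k → (Fin m → E)) (hF0 : ∀ j, F j 0 = 0)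
    (hind : LinearIndependent E
      (Fin.cons (Pi.single (0 : Fin m) (1 : E)) F : Fin (k + 1) → Fin m → E))
    (M : Matrix (Fin k) (Fin k) E)
    (hM : ∀ j j', M j j' = ∑ ℓ, F j ℓ * F j' ℓ) :
    Module.finrank E
        ↥(Submodule.span E (Set.range
            (Fin.cons (Pi.single (0 : Fin m) (1 : E)) F : Fin (k + 1) → Fin m → E)) ⊓
          (dotForm E m).orthogonal (Submodule.span E (Set.range
            (Fin.cons (Pi.single (0 : Fin m) (1 : E)) F : Fin (k + 1) → Fin m → E)))) =
      k - M.rank := by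
  classical
  set e : Fin m → E := Pi.single (0 : Fin m) (1 : E) with he
  set g : Fin (k + 1) → Fin m → E := Fin.cons e F with hg
  set C : Submodule E (Fin m → E) := Submodule.span E (Set.range g) with hC
  have hFind : LinearIndependent E F := by
    have := hind.comp Fin.succ (Fin.succ_injective k)
    simpa [hg, Function.comp] using this
  set φ : (Fin k → E) →ₗ[E] (Fin m → E) := Fintype.linearCombination E F with hφdef
  have hφ : ∀ a, φ a = ∑ j, a j • F j := fun a => Fintype.linearCombination_apply E F a
  have hφinj : Function.Injective φ := by
    intro a b hab
    have h0 : ∑ j, (a - b) j • F j = 0 := by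
      rw [← hφ, map_sub, hab, sub_self]
    have hz := Fintype.linearIndependent_iff.mp hFind (a - b) h0
    funext j
    have := hz j
    simpa [sub_eq_zero] using this
  set K : Submodule E (Fin k → E) := LinearMap.ker M.mulVecLin with hK
  -- pairing computations
  have hpair : ∀ (f : Fin m → E) a, dotForm E m f (φ a) = ∑ j, a j * ∑ ℓ, f ℓ * F j ℓ := by
    intro f a
    rw [dotForm_apply', hφ]
    simp only [Finset.sum_apply, Pi.smul_apply, smul_eq_mul, Finset.mul_sum]
    rw [Finset.sum_comm]
    refine Finset.sum_congr rfl fun j _ => ?_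
    exact Finset.sum_congr rfl fun ℓ _ => by ring
  have hpaire : ∀ a, dotForm E m e (φ a) = 0 := by
    intro a
    rw [hpair]
    refine Finset.sum_eq_zero fun j _ => ?_
    have : ∑ ℓ, e ℓ * F j ℓ = F j 0 := by
      rw [Finset.sum_eq_single (0 : Fin m)]
      · simp [he]
      · intro b _ hb; simp [he, Pi.single_apply, hb]
      · simp
    rw [this, hF0, mul_zero]
  have hpairF : ∀ (j' : Fin k) a, dotForm E m (F j') (φ a) = M.mulVec a j' := by
    intro j' a
    rw [hpair]
    have : ∀ j, ∑ ℓ, F j' ℓ * F j ℓ = M j' j := fun j => (hM j' j).symm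
    simp only [this]
    rw [Matrix.mulVec, dotProduct]
    exact Finset.sum_congr rfl fun j _ => mul_comm _ _
  -- the hull equals the image of ker M under φ
  have hull_eq : C ⊓ (dotForm E m).orthogonal C = Submodule.map φ K := by
    apply le_antisymm
    · rintro x ⟨hxC, hxO⟩
      obtain ⟨c, hc⟩ := (Submodule.mem_span_range_iff_exists_fun E).mp hxC
      have hge : ∀ i, g i ∈ C := fun i => Submodule.subset_span ⟨i, rfl⟩
      have hx0 : dotForm E m e x = 0 := hxO e (hge 0)
      have hxval : dotForm E m e x = c 0 := by
        rw [← hc, dotForm_apply']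
        have h1 : ∀ ℓ, e ℓ * (∑ i, c i • g i) ℓ = if ℓ = 0 then c 0 else 0 := by
          intro ℓ
          by_cases hℓ : ℓ = 0
          · subst hℓ
            simp only [he, Pi.single_eq_same, one_mul, if_pos rfl, Finset.sum_apply,
              Pi.smul_apply, smul_eq_mul]
            rw [Fin.sum_univ_succ]
            simp [hg, hF0, he]
          · simp [he, Pi.single_apply, hℓ]
        simp only [h1]
        simp
      have hc0 : c 0 = 0 := by rw [← hxval, hx0]
      have hxφ : x = φ (c ∘ Fin.succ) := by
        rw [hφ, ← hc, Fin.sum_univ_succ]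
        simp [hg, hc0]
      refine ⟨c ∘ Fin.succ, ?_, hxφ.symm⟩
      simp only [hK, SetLike.mem_coe, LinearMap.mem_ker]
      funext j'
      have h2 : dotForm E m (F j') x = 0 := hxO (F j') (hge j'.succ)
      rw [hxφ, hpairF] at h2
      simpa [Matrix.mulVecLin_apply] using h2
    · rintro x ⟨a, haK, rfl⟩
      constructor
      · rw [hφ]
        exact Submodule.sum_mem _ fun j _ =>
          Submodule.smul_mem _ _ (Submodule.subset_span ⟨j.succ, by simp [hg]⟩)
      · intro n hn
        have hset : C ≤ LinearMap.ker ((dotForm E m).flip (φ a)) := by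
          rw [hC, Submodule.span_le]
          rintro _ ⟨i, rfl⟩
          rw [SetLike.mem_coe, LinearMap.mem_ker]
          refine Fin.cases ?_ ?_ i
          · show dotForm E m (g 0) (φ a) = 0
            simpa [hg] using hpaire a
          · intro j
            show dotForm E m (g j.succ) (φ a) = 0
            have : g j.succ = F j := by simp [hg]
            rw [this, hpairF]
            have : M.mulVec a = 0 := haK
            rw [this]; rfl
        have := hset hn
        rw [LinearMap.mem_ker] at this
        exact this
  rw [hull_eq]
  have hequiv := Submodule.equivMapOfInjective φ hφinj K
  rw [← LinearEquiv.finrank_eq hequiv]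
  have hrn := LinearMap.finrank_range_add_finrank_ker M.mulVecLin
  rw [Module.finrank_pi] at hrn
  have hrank : M.rank = Module.finrank E (LinearMap.range M.mulVecLin) := rfl
  simp only [Fintype.card_fin] at hrn
  show Module.finrank E ↥(LinearMap.ker M.mulVecLin) = k - M.rank
  omega
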